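/- If a formal power series valued function X(μ₁,μ₂,μ₃), symmetric under cyclic permutation of its three partition arguments, satisfies the condensation recurrence q^A·X(μ₁,μ₂,μ₃)·X(μ₁^{rc},μ₂^{rc},μ₃) = q^B·X(μ₁^{rc},μ₂,μ₃)·X(μ₁,μ₂^{rc},μ₃) + q^C·X(μ₁^r,μ₂^c,μ₃)·X(μ₁^c,μ₂^r,μ₃) (for fixed exponents A,B,C depending on the arguments), and X is a power series with nonzero constant term in all instances, then X is uniquely determined by its values X(μ₁,μ₂,∅) on triples with third partition empty. Formally: two cyclically symmetric solutions X, Y of the recurrence with invertible values that agree whenever some argument is empty agree everywhere. -/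

import Mathlib

/-!
STATEMENT 16. Uniqueness of solutions of the condensation recurrence: a
cyclically symmetric, power-series valued function X(μ₁,μ₂,μ₃) of three
partitions with invertible values (nonzero constant term) satisfying
q^A·X(μ₁,μ₂,μ₃)·X(μ₁^{rc},μ₂^{rc},μ₃)
  = q^B·X(μ₁^{rc},μ₂,μ₃)·X(μ₁,μ₂^{rc},μ₃) + q^C·X(μ₁^r,μ₂^c,μ₃)·X(μ₁^c,μ₂^r,μ₃)
(for all μ₁, μ₂ nonempty) is determined by its values on triples whose third
argument is empty: two such solutions agreeing there agree everywhere.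

Since A, B, C take values in ℤ, the recurrence is stated in the Laurent series
ring K((q)) = HahnSeries ℤ K, with q^A = single A 1 and power series
coerced in.  The operations μ ↦ μ^r, μ^c, μ^{rc} are given, together with the
size inequalities (proved elsewhere, cf. Statements 3 and 17) that drive the
induction on |μ₁| + |μ₂| + |μ₃|.
-/

/-- Partitions: antitone, eventually-zero functions ℕ → ℕ. -/
def P : Type := {f : ℕ → ℕ // Antitone f ∧ ∃ N, ∀ n, N ≤ n → f n = 0}

/-- The empty partition. -/
def Pzero : P := ⟨fun _ => 0, fun _ _ _ => le_rfl, 0, fun _ _ => rfl⟩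

/-- Size of a partition (sum of its parts; a finite sum). -/
noncomputable def psize (μ : P) : ℕ := ∑' n, μ.1 n

theorem condensation_uniqueness (K : Type*) [Field K]
    (opR opC opRC : P → P)
    -- size facts for the Maya-diagram operations (cf. Statements 3 and 17):
    (hRC : ∀ μ, μ ≠ Pzero → psize (opRC μ) < psize μ)
    (hR : ∀ μ, μ ≠ Pzero → psize (opR μ) < psize μ)
    (hC : ∀ μ, μ ≠ Pzero → psize (opC μ) ≤ psize μ)
    (A B C : P → P → P → ℤ)
    (X Y : P → P → P → PowerSeries K)
    -- invertible values: nonzero constant term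
    (hX0 : ∀ μ₁ μ₂ μ₃, PowerSeries.constantCoeff (R := K) (X μ₁ μ₂ μ₃) ≠ 0)
    (hY0 : ∀ μ₁ μ₂ μ₃, PowerSeries.constantCoeff (R := K) (Y μ₁ μ₂ μ₃) ≠ 0)
    -- cyclic symmetry
    (hXsym : ∀ μ₁ μ₂ μ₃, X μ₁ μ₂ μ₃ = X μ₂ μ₃ μ₁)
    (hYsym : ∀ μ₁ μ₂ μ₃, Y μ₁ μ₂ μ₃ = Y μ₂ μ₃ μ₁)
    -- the condensation recurrence, for μ₁, μ₂ nonempty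
    (hXrec : ∀ μ₁ μ₂ μ₃, μ₁ ≠ Pzero → μ₂ ≠ Pzero →
      (HahnSeries.single (A μ₁ μ₂ μ₃) (1 : K)) *
          ((X μ₁ μ₂ μ₃ : LaurentSeries K) * (X (opRC μ₁) (opRC μ₂) μ₃ : LaurentSeries K)) =
        (HahnSeries.single (B μ₁ μ₂ μ₃) (1 : K)) *
            ((X (opRC μ₁) μ₂ μ₃ : LaurentSeries K) * (X μ₁ (opRC μ₂) μ₃ : LaurentSeries K)) +
          (HahnSeries.single (C μ₁ μ₂ μ₃) (1 : K)) *
            ((X (opR μ₁) (opC μ₂) μ₃ : LaurentSeries K) * (X (opC μ₁) (opR μ₂) μ₃ : LaurentSeries K)))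
    (hYrec : ∀ μ₁ μ₂ μ₃, μ₁ ≠ Pzero → μ₂ ≠ Pzero →
      (HahnSeries.single (A μ₁ μ₂ μ₃) (1 : K)) *
          ((Y μ₁ μ₂ μ₃ : LaurentSeries K) * (Y (opRC μ₁) (opRC μ₂) μ₃ : LaurentSeries K)) =
        (HahnSeries.single (B μ₁ μ₂ μ₃) (1 : K)) *
            ((Y (opRC μ₁) μ₂ μ₃ : LaurentSeries K) * (Y μ₁ (opRC μ₂) μ₃ : LaurentSeries K)) +
          (HahnSeries.single (C μ₁ μ₂ μ₃) (1 : K)) *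
            ((Y (opR μ₁) (opC μ₂) μ₃ : LaurentSeries K) * (Y (opC μ₁) (opR μ₂) μ₃ : LaurentSeries K)))
    -- base case: agreement when some argument is empty
    (hbase : ∀ μ₁ μ₂, X μ₁ μ₂ Pzero = Y μ₁ μ₂ Pzero) :
    X = Y := by
  have coeinj : ∀ {f g : PowerSeries K}, (f : LaurentSeries K) = (g : LaurentSeries K) → f = g :=
    fun h => HahnSeries.ofPowerSeries_injective h
  have coene : ∀ f : PowerSeries K, PowerSeries.constantCoeff (R := K) f ≠ 0 →
      (f : LaurentSeries K) ≠ 0 := by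
    intro f hf h
    apply hf
    have : f = 0 := coeinj (by rw [h]; exact (map_zero (HahnSeries.ofPowerSeries ℤ K)).symm)
    simp [this]
  suffices key : ∀ n : ℕ, ∀ μ₁ μ₂ μ₃ : P, psize μ₁ + psize μ₂ + psize μ₃ ≤ n →
      X μ₁ μ₂ μ₃ = Y μ₁ μ₂ μ₃ by
    funext μ₁ μ₂ μ₃
    exact key _ μ₁ μ₂ μ₃ le_rfl
  intro n
  induction n with
  | zero =>
    intro μ₁ μ₂ μ₃ hle
    by_cases h3 : μ₃ = Pzero
    · subst h3; exact hbase μ₁ μ₂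
    by_cases h1 : μ₁ = Pzero
    · subst h1; rw [hXsym, hYsym]; exact hbase μ₂ μ₃
    · have := hRC μ₁ h1
      omega
  | succ n ih =>
    intro μ₁ μ₂ μ₃ hle
    by_cases h3 : μ₃ = Pzero
    · subst h3; exact hbase μ₁ μ₂
    by_cases h1 : μ₁ = Pzero
    · subst h1; rw [hXsym, hYsym]; exact hbase μ₂ μ₃
    by_cases h2 : μ₂ = Pzero
    · subst h2; rw [hXsym, hXsym, hYsym, hYsym]; exact hbase μ₃ μ₁
    · have d1 := hRC μ₁ h1
      have d2 := hRC μ₂ h2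
      have d3 := hR μ₁ h1
      have d4 := hC μ₂ h2
      have d5 := hC μ₁ h1
      have d6 := hR μ₂ h2
      have e1 : X (opRC μ₁) (opRC μ₂) μ₃ = Y (opRC μ₁) (opRC μ₂) μ₃ :=
        ih _ _ _ (by omega)
      have e2 : X (opRC μ₁) μ₂ μ₃ = Y (opRC μ₁) μ₂ μ₃ := ih _ _ _ (by omega)
      have e3 : X μ₁ (opRC μ₂) μ₃ = Y μ₁ (opRC μ₂) μ₃ := ih _ _ _ (by omega)
      have e4 : X (opR μ₁) (opC μ₂) μ₃ = Y (opR μ₁) (opC μ₂) μ₃ := ih _ _ _ (by omega)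
      have e5 : X (opC μ₁) (opR μ₂) μ₃ = Y (opC μ₁) (opR μ₂) μ₃ := ih _ _ _ (by omega)
      have hx := hXrec μ₁ μ₂ μ₃ h1 h2
      have hy := hYrec μ₁ μ₂ μ₃ h1 h2
      rw [e1, e2, e3, e4, e5] at hx
      have heq := hx.trans hy.symm
      have hq : (HahnSeries.single (A μ₁ μ₂ μ₃) (1 : K) : LaurentSeries K) ≠ 0 :=
        HahnSeries.single_ne_zero one_ne_zero
      have hY' : (Y (opRC μ₁) (opRC μ₂) μ₃ : LaurentSeries K) ≠ 0 :=
        coene _ (hY0 _ _ _)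
      have hcanc := mul_left_cancel₀ hq heq
      have := mul_right_cancel₀ hY' hcanc
      exact coeinj this
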